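/- A holomorphic function F on the space of n×n complex matrices satisfying F(u⁻¹ z u) = F(z) for all unitary u and all z, in fact satisfies F(g⁻¹ z g) = F(z) for all invertible complex matrices g and all z. -/

import Mathlib

open NormedSpace
open scoped Matrix

noncomputable abbrev M (n : ℕ) := Matrix (Fin n) (Fin n) ℂ

lemma entire_zero_of_real_zero {f : ℂ → ℂ} (hf : Differentiable ℂ f)
    (h : ∀ r : ℝ, f r = 0) : ∀ z, f z = 0 := by
  have han : AnalyticOnNhd ℂ f Set.univ := fun z _ => hf.analyticAt z
  have hfreq : ∃ᶠ z in nhdsWithin (0 : ℂ) {(0:ℂ)}ᶜ, f z = 0 := by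
    have htend : Filter.Tendsto (fun k : ℕ => ((((k:ℝ)+1)⁻¹ : ℝ) : ℂ)) Filter.atTop
        (nhdsWithin (0:ℂ) {(0:ℂ)}ᶜ) := by
      rw [tendsto_nhdsWithin_iff]
      constructor
      · have h1 : Filter.Tendsto (fun k : ℕ => ((k:ℝ)+1)⁻¹) Filter.atTop (nhds 0) :=
          tendsto_one_div_add_atTop_nhds_zero_nat.congr (by intro k; simp [one_div])
        have h2 := (Complex.continuous_ofReal.tendsto 0).comp h1
        simpa [Function.comp_def] using h2
      · filter_upwards with k
        simp only [Set.mem_compl_iff, Set.mem_singleton_iff]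
        intro hc
        have h3 : ((k:ℝ)+1)⁻¹ = (0:ℝ) := by exact_mod_cast hc
        have h4 : (0:ℝ) < ((k:ℝ)+1)⁻¹ := by positivity
        rw [h3] at h4; exact lt_irrefl _ h4
    exact htend.frequently (Filter.Frequently.of_forall fun k => h _)
  intro z
  exact han.eqOn_zero_of_preconnected_of_frequently_eq_zero isPreconnected_univ
    (Set.mem_univ 0) hfreq (Set.mem_univ z)

noncomputable def matPiEquiv (n : ℕ) : (M n) ≃ₗ[ℂ] (Fin n → Fin n → ℂ) :=
  { toFun := fun A => A, invFun := fun v => v, map_add' := fun _ _ => rfl,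
    map_smul' := fun _ _ => rfl, left_inv := fun _ => rfl, right_inv := fun _ => rfl }

section A
variable {n : ℕ}
attribute [local instance] Matrix.linftyOpNormedAddCommGroup Matrix.linftyOpNormedRing
  Matrix.linftyOpNormedAlgebra

lemma exp_differentiable : Differentiable ℂ (exp : M n → M n) := fun x =>
  (analyticAt_exp_of_mem_ball (𝕂 := ℂ) x (by simp [expSeries_radius_eq_top])).differentiableAt

lemma F_diff_linfty {F : M n → ℂ}
    (hF : Differentiable ℂ (fun v : Fin n → Fin n → ℂ => F (Matrix.of v))) :
    Differentiable ℂ F :=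
  hF.comp (matPiEquiv n).toContinuousLinearEquiv.differentiable

lemma conj_diff {F : M n → ℂ} (hF : Differentiable ℂ F) (a x₀ z : M n) :
    Differentiable ℂ (fun s : ℂ => F (exp (-(s • a + x₀)) * z * exp (s • a + x₀))) := by
  have haff : Differentiable ℂ (fun s : ℂ => s • a + x₀) :=
    (differentiable_id.smul_const a).add_const x₀
  have h1 : Differentiable ℂ (fun s : ℂ => exp (s • a + x₀)) :=
    exp_differentiable.comp haff
  have h2 : Differentiable ℂ (fun s : ℂ => exp (-(s • a + x₀))) :=
    exp_differentiable.comp haff.neg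
  exact hF.comp ((h2.mul (differentiable_const z)).mul h1)

lemma exp_skew_unitary (x : M n) (hx : xᴴ = -x) :
    exp x ∈ Matrix.unitaryGroup (Fin n) ℂ := by
  have : x ∈ skewAdjoint (M n) := by rw [skewAdjoint.mem_iff]; exact hx
  haveI hcs : @ContinuousStar (M n) (@UniformSpace.toTopologicalSpace _
      (@PseudoMetricSpace.toUniformSpace _ (inferInstance : NormedRing (M n)).toPseudoMetricSpace)) _ :=
    ⟨by exact continuous_id.matrix_conjTranspose⟩
  exact exp_mem_unitary_of_mem_skewAdjoint this

lemma core_exp_invariant {F : M n → ℂ}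
    (hF : Differentiable ℂ (fun v : Fin n → Fin n → ℂ => F (Matrix.of v)))
    (hU : ∀ u : Matrix.unitaryGroup (Fin n) ℂ, ∀ z,
      F ((↑(u⁻¹) : M n) * z * (↑u : M n)) = F z)
    (x z : M n) : F (exp (-x) * z * exp x) = F z := by
  have hF' : Differentiable ℂ F := F_diff_linfty hF
  obtain ⟨a, c, ha, hc, hx⟩ : ∃ a c : M n, aᴴ = -a ∧ cᴴ = -c
      ∧ (1:ℂ) • a + Complex.I • c = x := by
    refine ⟨(1/2 : ℂ) • (x - xᴴ), (-(1/2) * Complex.I) • (x + xᴴ), ?_, ?_, ?_⟩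
    · rw [Matrix.conjTranspose_smul, Matrix.conjTranspose_sub,
        Matrix.conjTranspose_conjTranspose]
      rw [show star (1/2 : ℂ) = (1/2 : ℂ) by simp [Complex.ext_iff]]
      module
    · rw [Matrix.conjTranspose_smul, Matrix.conjTranspose_add,
        Matrix.conjTranspose_conjTranspose]
      rw [show star (-(1/2) * Complex.I) = -(-(1/2) * Complex.I) by
        simp [Complex.ext_iff]]
      module
    · rw [smul_smul, smul_smul]
      rw [show Complex.I * (-(1/2) * Complex.I) = (1/2 : ℂ) by
        ring_nf; rw [Complex.I_sq]; ring]
      module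
  have hskew : ∀ s t : ℝ, ((s:ℂ) • a + (t:ℂ) • c)ᴴ = -((s:ℂ) • a + (t:ℂ) • c) := by
    intro s t
    rw [Matrix.conjTranspose_add, Matrix.conjTranspose_smul, Matrix.conjTranspose_smul,
      ha, hc]
    rw [show star ((s:ℝ):ℂ) = ((s:ℝ):ℂ) by simp [Complex.ext_iff],
      show star ((t:ℝ):ℂ) = ((t:ℝ):ℂ) by simp [Complex.ext_iff]]
    module
  have h0 : ∀ s t : ℝ, F (exp (-((s:ℂ) • a + (t:ℂ) • c)) * z
      * exp ((s:ℂ) • a + (t:ℂ) • c)) = F z := by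
    intro s t
    have hmem := exp_skew_unitary _ (hskew s t)
    have h := hU ⟨exp ((s:ℂ) • a + (t:ℂ) • c), hmem⟩ z
    have hinv : (↑((⟨exp ((s:ℂ) • a + (t:ℂ) • c), hmem⟩ :
        Matrix.unitaryGroup (Fin n) ℂ)⁻¹) : M n)
        = exp (-((s:ℂ) • a + (t:ℂ) • c)) := by
      rw [← Unitary.star_eq_inv, Unitary.coe_star]
      show (exp ((s:ℂ) • a + (t:ℂ) • c))ᴴ = _
      rw [← Matrix.exp_conjTranspose, hskew s t]
    rw [hinv] at h
    exact h
  have h1 : ∀ t : ℝ, ∀ s : ℂ, F (exp (-(s • a + (t:ℂ) • c)) * z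
      * exp (s • a + (t:ℂ) • c)) = F z := by
    intro t
    have hall := entire_zero_of_real_zero
      ((conj_diff hF' a ((t:ℂ) • c) z).sub_const (F z))
      (fun r => by rw [sub_eq_zero]; exact h0 r t)
    intro s
    have := hall s
    rwa [sub_eq_zero] at this
  have h2 : ∀ s t : ℂ, F (exp (-(s • a + t • c)) * z * exp (s • a + t • c)) = F z := by
    intro s
    have hd : Differentiable ℂ (fun t : ℂ => F (exp (-(s • a + t • c)) * z
        * exp (s • a + t • c))) := by
      have hd0 := conj_diff hF' c (s • a) z
      simpa only [add_comm] using hd0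
    have hall := entire_zero_of_real_zero (hd.sub_const (F z))
      (fun r => by rw [sub_eq_zero]; exact h1 r s)
    intro t
    have := hall t
    rwa [sub_eq_zero] at this
  have := h2 1 Complex.I
  rwa [hx] at this

/-- exp x as a unit -/
noncomputable def expUnit (x : M n) : (M n)ˣ where
  val := exp x
  inv := exp (-x)
  val_inv := by
    rw [← Matrix.exp_add_of_commute _ _ (Commute.neg_right (Commute.refl x)), add_neg_cancel, exp_zero]
  inv_val := by
    rw [← Matrix.exp_add_of_commute _ _ (Commute.neg_left (Commute.refl x)), neg_add_cancel, exp_zero]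

lemma units_invariant {F : M n → ℂ}
    (hcore : ∀ (x z : M n), F (exp (-x) * z * exp x) = F z) :
    ∀ g : (M n)ˣ, ∀ z : M n, F (↑g⁻¹ * z * ↑g) = F z := by
  classical
  set S : Subgroup (M n)ˣ :=
    { carrier := {g : (M n)ˣ | ∀ z : M n, F (↑g⁻¹ * z * ↑g) = F z}
      one_mem' := by intro z; simp
      mul_mem' := by
        intro g h hg hh z
        have h1 := hh ((↑g⁻¹ : M n) * z * ↑g)
        have h2 := hg z
        simp only [mul_inv_rev, Units.val_mul] at *
        rw [← h2, ← h1]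
        congr 1
        noncomm_ring
      inv_mem' := by
        intro g hg z
        have := hg ((↑g : M n) * z * ↑g⁻¹)
        simp only [inv_inv]
        rw [show (↑g⁻¹ : M n) * ((↑g : M n) * z * ↑g⁻¹) * ↑g
            = ((↑g⁻¹ : M n) * ↑g) * z * ((↑g⁻¹ : M n) * ↑g) by noncomm_ring,
          Units.inv_mul, one_mul, mul_one] at this
        rw [← this] } with hS_def
  have hexp_mem : ∀ x : M n, expUnit x ∈ S := by
    intro x z
    exact hcore x z
  -- S is a neighborhood of 1
  have hnhds : (S : Set (M n)ˣ) ∈ nhds (1 : (M n)ˣ) := by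
    have hd : HasStrictFDerivAt (exp : M n → M n)
        ((ContinuousLinearEquiv.refl ℂ (M n) : M n ≃L[ℂ] M n) : M n →L[ℂ] M n) 0 := by
      exact (hasStrictFDerivAt_exp_zero : HasStrictFDerivAt (exp) (1 : M n →L[ℂ] M n) 0)
    have hmap : Filter.map (exp) (nhds (0 : M n)) = nhds (1 : M n) := by
      have := hd.map_nhds_eq_of_equiv
      rwa [exp_zero] at this
    have hexp_set : {A : M n | ∃ x, exp x = A} ∈ nhds (1 : M n) := by
      rw [← hmap]
      exact Filter.mem_map.2 (Filter.univ_mem' (fun x => ⟨x, rfl⟩))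
    have hcont : Filter.Tendsto (Units.val : (M n)ˣ → M n) (nhds 1) (nhds 1) := by
      simpa using (Units.continuous_val : Continuous (Units.val : (M n)ˣ → M n)).tendsto (1 : (M n)ˣ)
    have hpre := hcont hexp_set
    refine Filter.mem_of_superset hpre ?_
    rintro u ⟨x, hx⟩
    have : u = expUnit x := Units.ext hx.symm
    rw [this]
    exact hexp_mem x
  have hopen : IsOpen (S : Set (M n)ˣ) := Subgroup.isOpen_of_mem_nhds S hnhds
  have hclosed : IsClosed (S : Set (M n)ˣ) := Subgroup.isClosed_of_isOpen S hopen
  -- connectivity argument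
  intro g
  suffices hg : g ∈ S from fun z => hg z
  set J : ℂ → M n := fun t => (1 - t) • (1 : M n) + t • (↑g : M n) with hJ_def
  set P : Polynomial ℂ :=
    (Matrix.of fun i j => Polynomial.C ((1 : M n) i j)
      + Polynomial.X * (Polynomial.C ((↑g : M n) i j) - Polynomial.C ((1 : M n) i j))).det
    with hP_def
  have hPev : ∀ t : ℂ, P.eval t = (J t).det := by
    intro t
    rw [hP_def, ← Polynomial.coe_evalRingHom, RingHom.map_det]
    congr 1
    ext i j
    simp [Matrix.map_apply, hJ_def, Matrix.add_apply, Matrix.smul_apply, smul_eq_mul]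
    ring
  have hJ0 : J 0 = 1 := by simp [hJ_def]
  have hJ1 : J 1 = (↑g : M n) := by simp [hJ_def]
  have hP1 : P.eval 1 ≠ 0 := by
    rw [hPev, hJ1]
    exact (Matrix.isUnit_iff_isUnit_det _).1 g.isUnit |>.ne_zero
  have hPne : P ≠ 0 := fun h => hP1 (by simp [h])
  have hZfin : Set.Finite {t : ℂ | P.IsRoot t} := Polynomial.finite_setOf_isRoot hPne
  have hconn : IsPathConnected {t : ℂ | P.IsRoot t}ᶜ :=
    hZfin.countable.isPathConnected_compl_of_one_lt_rank
      (by
        rw [Complex.rank_real_complex]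
        exact (Cardinal.one_lt_two : (1:Cardinal.{0}) < 2))
  have h0mem : (0 : ℂ) ∈ {t : ℂ | P.IsRoot t}ᶜ := by
    simp only [Set.mem_compl_iff, Set.mem_setOf_eq, Polynomial.IsRoot]
    rw [hPev, hJ0]
    simp
  have h1mem : (1 : ℂ) ∈ {t : ℂ | P.IsRoot t}ᶜ := by
    simp only [Set.mem_compl_iff, Set.mem_setOf_eq, Polynomial.IsRoot]
    exact hP1
  obtain ⟨γ, hγ⟩ := (hconn.joinedIn 0 h0mem 1 h1mem)
  have hunit : ∀ i : unitInterval, IsUnit (J (γ i)) := by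
    intro i
    rw [Matrix.isUnit_iff_isUnit_det, isUnit_iff_ne_zero]
    have := hγ i
    simp only [Set.mem_compl_iff, Set.mem_setOf_eq, Polynomial.IsRoot] at this
    rwa [hPev] at this
  set u : unitInterval → (M n)ˣ := fun i => (hunit i).unit with hu_def
  have hJcont : Continuous J := by
    apply Continuous.add
    · exact (continuous_const.sub continuous_id).smul continuous_const
    · exact continuous_id.smul continuous_const
  have hvalcont : Continuous fun i => J (γ i) := hJcont.comp γ.continuous
  have hucont : Continuous u := by
    rw [Units.continuous_iff]
    constructor
    · have hval : Units.val ∘ u = fun i => J (γ i) := funext fun i => (hunit i).unit_spec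
      rw [hval]; exact hvalcont
    · have hinvfun : (fun i => (((u i)⁻¹ : (M n)ˣ) : M n)) = fun i => Ring.inverse (J (γ i)) := by
        funext i
        rw [← (hunit i).unit_spec, Ring.inverse_unit]
      rw [hinvfun, continuous_iff_continuousAt]
      intro i
      have h1 : ContinuousAt Ring.inverse (J (γ i)) := by
        have := NormedRing.inverse_continuousAt ((hunit i).unit)
        rwa [(hunit i).unit_spec] at this
      exact ContinuousAt.comp (g := Ring.inverse) h1 hvalcont.continuousAt
  have hT : IsClopen (u ⁻¹' (S : Set (M n)ˣ)) :=
    ⟨hclosed.preimage hucont, hopen.preimage hucont⟩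
  have hT0 : (0 : unitInterval) ∈ u ⁻¹' (S : Set (M n)ˣ) := by
    have : u 0 = 1 := Units.ext (by rw [(hunit 0).unit_spec]; simp [γ.source, hJ0])
    simp only [Set.mem_preimage, this]
    exact S.one_mem
  have huniv := hT.eq_univ ⟨0, hT0⟩
  have hT1 : (1 : unitInterval) ∈ u ⁻¹' (S : Set (M n)ˣ) := by rw [huniv]; trivial
  have hu1 : u 1 = g := Units.ext (by rw [(hunit 1).unit_spec]; simp [γ.target, hJ1])
  simp only [Set.mem_preimage] at hT1
  rwa [hu1] at hT1

end A

attribute [local instance] Matrix.normedAddCommGroup Matrix.normedSpace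

/-- A holomorphic function on `M_n(ℂ)` invariant under conjugation by all unitary
matrices is invariant under conjugation by all invertible matrices. -/
theorem unitary_invariant_holomorphic_is_GL_invariant (n : ℕ)
    (F : Matrix (Fin n) (Fin n) ℂ → ℂ) (hF : Differentiable ℂ F)
    (hU : ∀ u : Matrix.unitaryGroup (Fin n) ℂ, ∀ z,
      F ((↑(u⁻¹) : Matrix (Fin n) (Fin n) ℂ) * z * (↑u : Matrix (Fin n) (Fin n) ℂ)) = F z) :
    ∀ g : Matrix.GeneralLinearGroup (Fin n) ℂ, ∀ z,
      F ((↑(g⁻¹) : Matrix (Fin n) (Fin n) ℂ) * z * (↑g : Matrix (Fin n) (Fin n) ℂ)) = F z := by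
  have hF' : Differentiable ℂ (fun v : Fin n → Fin n → ℂ => F (Matrix.of v)) :=
    hF.comp (matPiEquiv n).symm.toContinuousLinearEquiv.differentiable
  intro g z
  exact units_invariant (core_exp_invariant hF' hU) g z
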